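/- Let G be a bipartite graph between Δ unknowns and a set of equations (symbols) where every equation has degree exactly β (involves exactly β unknowns with generic coefficients). If every unknown has degree at least 1 and at least Δ-1 of the unknowns have degree at least β, then G admits a matching saturating all Δ unknowns; consequently, Hall's condition Σ ℓ_i > β(d-1) holds for every set of d unknowns with degrees ℓ_0, ..., ℓ_{d-1}. -/
import Mathlib


/-- Bipartite decoding graph between `Δ` unknowns and equations, where every equation involves
exactly `β` unknowns (generic coefficients).  If every unknown has degree at least `1` and at
least `Δ - 1` unknowns have degree at least `β`, then there is a matching saturating all
unknowns; consequently Hall's condition `Σ ℓᵢ > β(d-1)` holds for every nonempty set of `d`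
unknowns with degrees `ℓ₀, ..., ℓ_{d-1}`. -/
theorem stmt7 {E : Type*} [Fintype E] [DecidableEq E] (Δ β : ℕ) (hβ : 0 < β) (hΔ : 0 < Δ)
    (R : E → Finset (Fin Δ)) (hsize : ∀ e, (R e).card = β)
    (deg : Fin Δ → ℕ)
    (hdeg : ∀ u, deg u = (Finset.univ.filter (fun e : E => u ∈ R e)).card)
    (h1 : ∀ u, 1 ≤ deg u)
    (h2 : Δ - 1 ≤ (Finset.univ.filter (fun u : Fin Δ => β ≤ deg u)).card) :
    (∃ f : Fin Δ → E, Function.Injective f ∧ ∀ u, u ∈ R (f u)) ∧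
    ∀ W : Finset (Fin Δ), W.Nonempty → β * (W.card - 1) < ∑ u ∈ W, deg u := by
  classical
  -- Hall-type lower bound on degree sums
  have hall : ∀ W : Finset (Fin Δ), W.Nonempty → β * (W.card - 1) < ∑ u ∈ W, deg u := by
    intro W hW
    set B := W.filter (fun u => ¬ β ≤ deg u) with hB
    have hBsub : B ⊆ W := Finset.filter_subset _ _
    have hBcard : B.card ≤ 1 := by
      have hsub : B ⊆ Finset.univ.filter (fun u : Fin Δ => ¬ β ≤ deg u) := by
        intro u hu
        simp only [hB, Finset.mem_filter] at hu ⊢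
        exact ⟨Finset.mem_univ u, hu.2⟩
      have hsplit := Finset.card_filter_add_card_filter_not
        (s := (Finset.univ : Finset (Fin Δ))) (p := fun u => β ≤ deg u)
      have hcard := Finset.card_le_card hsub
      simp only [Finset.card_univ, Fintype.card_fin] at hsplit
      omega
    have hlow : β * (W.card - B.card) + B.card ≤ ∑ u ∈ W, deg u := by
      have hdisj : Disjoint (W \ B) B := Finset.sdiff_disjoint
      have hunion : (W \ B) ∪ B = W := Finset.sdiff_union_of_subset hBsub
      calc β * (W.card - B.card) + B.card
          = ∑ _u ∈ (W \ B), β + ∑ _u ∈ B, 1 := by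
            rw [Finset.sum_const, Finset.sum_const, Finset.card_sdiff_of_subset hBsub]
            simp [Nat.mul_comm]
        _ ≤ ∑ u ∈ (W \ B), deg u + ∑ u ∈ B, deg u := by
            gcongr with u hu u hu
            · simp only [hB, Finset.mem_sdiff, Finset.mem_filter, not_and, not_not] at hu
              exact hu.2 hu.1
            · exact h1 u
        _ = ∑ u ∈ W, deg u := by rw [← Finset.sum_union hdisj, hunion]
    have hWc : 1 ≤ W.card := Finset.card_pos.mpr hW
    have hBW : B.card ≤ W.card := Finset.card_le_card hBsub
    interval_cases h : B.card
    · rw [Nat.sub_zero] at hlow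
      have : β * (W.card - 1) < β * W.card :=
        Nat.mul_lt_mul_of_pos_left (by omega) hβ
      omega
    · omega
  refine ⟨?_, hall⟩
  -- Matching via Hall's marriage theorem
  set t : Fin Δ → Finset E := fun u => Finset.univ.filter (fun e => u ∈ R e) with ht
  have key : ∀ S : Finset (Fin Δ), S.card ≤ (S.biUnion t).card := by
    intro S
    rcases S.eq_empty_or_nonempty with rfl | hS
    · simp
    have hsum : ∑ u ∈ S, deg u = ∑ e ∈ S.biUnion t, (S.filter (fun u => u ∈ R e)).card := by
      have h1' : ∑ u ∈ S, deg u = ∑ u ∈ S, ∑ e : E, if u ∈ R e then 1 else 0 := by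
        refine Finset.sum_congr rfl fun u _ => ?_
        rw [hdeg u, Finset.card_filter]
      rw [h1', Finset.sum_comm]
      rw [← Finset.sum_subset (Finset.subset_univ (S.biUnion t))]
      · refine Finset.sum_congr rfl fun e _ => ?_
        rw [Finset.card_filter]
      · intro e _ he
        simp only [Finset.mem_biUnion, ht, Finset.mem_filter, Finset.mem_univ, true_and,
          not_exists, not_and] at he
        refine Finset.sum_eq_zero fun u hu => ?_
        simp [he u hu]
    have hbound : ∑ u ∈ S, deg u ≤ β * (S.biUnion t).card := by
      rw [hsum]
      calc ∑ e ∈ S.biUnion t, (S.filter (fun u => u ∈ R e)).card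
          ≤ ∑ _e ∈ S.biUnion t, β := by
            refine Finset.sum_le_sum fun e _ => ?_
            rw [← hsize e]
            exact Finset.card_le_card fun u hu => (Finset.mem_filter.mp hu).2
        _ = β * (S.biUnion t).card := by rw [Finset.sum_const]; ring
    have hh := hall S hS
    have hScard : 1 ≤ S.card := Finset.card_pos.mpr hS
    by_contra hcon
    push_neg at hcon
    have : (S.biUnion t).card ≤ S.card - 1 := by omega
    have : β * (S.biUnion t).card ≤ β * (S.card - 1) := Nat.mul_le_mul_left β this
    omega
  obtain ⟨f, hf, hfm⟩ := (Finset.all_card_le_biUnion_card_iff_existsInjective' t).mp key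
  refine ⟨f, hf, fun u => ?_⟩
  have := hfm u
  simp only [ht, Finset.mem_filter] at this
  exact this.2
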